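/- Let P ⊆ ℕ_{≥2} be an infinite set of pairwise relatively prime positive integers. Then the Puiseux monoid M_P = ⟨1/p : p ∈ P⟩ satisfies the ascending chain condition on principal ideals. -/

import Mathlib

/-- An atom of the additive submonoid `M`: a nonzero element of `M` that is not the
sum of two nonzero elements of `M`. -/
def IsAtomOf {α : Type*} [AddCommMonoid α] (M : AddSubmonoid α) (a : α) : Prop :=
  a ∈ M ∧ a ≠ 0 ∧ ∀ b ∈ M, ∀ c ∈ M, b + c = a → b = 0 ∨ c = 0

/-- The length set of `q` in `M`: the set of all `ℓ` such that `q` is a sum of `ℓ`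
atoms of `M` (counted with multiplicity). -/
def LengthSet {α : Type*} [AddCommMonoid α] (M : AddSubmonoid α) (q : α) : Set ℕ :=
  {ℓ | ∃ s : Multiset α, Multiset.card s = ℓ ∧ (∀ a ∈ s, IsAtomOf M a) ∧ s.sum = q}

/-- The additive submonoid `M` satisfies the ACCP: every ascending chain of principal
ideals `f n + M ⊆ f (n+1) + M` stabilizes. -/
def AddACCP {α : Type*} [AddCommMonoid α] (M : AddSubmonoid α) : Prop :=
  ∀ f : ℕ → α, (∀ n, f n ∈ M) → (∀ n, ∃ c ∈ M, f n = f (n + 1) + c) →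
    ∃ N, ∀ n ≥ N, ∃ c ∈ M, f n = f N + c

/-- The Puiseux monoid generated by the reciprocals of the elements of `P`. -/
def MP (P : Set ℕ) : AddSubmonoid ℚ :=
  AddSubmonoid.closure {q : ℚ | ∃ p ∈ P, q = 1 / (p : ℚ)}

namespace Stmt7Aux

/-- The rational value of a representation. -/
def val (g : ℕ →₀ ℕ) : ℚ := g.sum fun p a => (a : ℚ) / p

/-- Integer-part invariant. -/
def Nval (g : ℕ →₀ ℕ) : ℕ := g.sum fun p a => a / p

/-- Fractional-coefficient invariant. -/
def Sval (g : ℕ →₀ ℕ) : ℕ := g.sum fun p a => a % p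

lemma val_add (g h : ℕ →₀ ℕ) : val (g + h) = val g + val h :=
  Finsupp.sum_add_index' (by simp) (fun a b c => by push_cast; rw [add_div])

lemma val_sum {g : ℕ →₀ ℕ} {s : Finset ℕ} (hs : g.support ⊆ s) :
    val g = ∑ r ∈ s, (g r : ℚ) / r :=
  Finsupp.sum_of_support_subset _ hs _ (by simp)

lemma nval_sum {g : ℕ →₀ ℕ} {s : Finset ℕ} (hs : g.support ⊆ s) :
    Nval g = ∑ r ∈ s, g r / r :=
  Finsupp.sum_of_support_subset _ hs _ (by simp)

lemma sval_sum {g : ℕ →₀ ℕ} {s : Finset ℕ} (hs : g.support ⊆ s) :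
    Sval g = ∑ r ∈ s, g r % r :=
  Finsupp.sum_of_support_subset _ hs _ (by simp)

lemma exists_rep {P : Set ℕ} {q : ℚ} (hq : q ∈ MP P) :
    ∃ g : ℕ →₀ ℕ, ↑g.support ⊆ P ∧ val g = q := by
  induction hq using AddSubmonoid.closure_induction with
  | mem x hx =>
      obtain ⟨p, hp, rfl⟩ := hx
      refine ⟨Finsupp.single p 1, ?_, ?_⟩
      · intro a ha
        have := Finsupp.support_single_subset ha
        simp only [Finset.mem_singleton] at this
        subst this; exact hp
      · simp [val, Finsupp.sum_single_index]
  | zero => exact ⟨0, by simp, by simp [val]⟩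
  | add x y hx hy ihx ihy =>
      obtain ⟨g, hg, rfl⟩ := ihx
      obtain ⟨h, hh, rfl⟩ := ihy
      refine ⟨g + h, ?_, val_add g h⟩
      intro a ha
      rcases Finset.mem_union.mp (Finsupp.support_add ha) with h' | h'
      · exact hg h'
      · exact hh h'

/-- Well-definedness of the coefficients mod p. -/
lemma mod_eq {P : Set ℕ} (h2 : ∀ p ∈ P, 2 ≤ p)
    (hcop : ∀ p ∈ P, ∀ q ∈ P, p ≠ q → Nat.Coprime p q)
    {g h : ℕ →₀ ℕ} (hg : ↑g.support ⊆ P) (hh : ↑h.support ⊆ P)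
    (hv : val g = val h) {p : ℕ} (hp : p ∈ P) :
    g p % p = h p % p := by
  classical
  set s : Finset ℕ := insert p (g.support ∪ h.support) with hs
  have hsP : ∀ r ∈ s, r ∈ P := by
    intro r hr
    rcases Finset.mem_insert.mp hr with rfl | hr
    · exact hp
    · rcases Finset.mem_union.mp hr with h' | h'
      · exact hg h'
      · exact hh h'
  have hps : p ∈ s := Finset.mem_insert_self _ _
  have hgsub : g.support ⊆ s :=
    Finset.Subset.trans Finset.subset_union_left (Finset.subset_insert _ _)
  have hhsub : h.support ⊆ s :=
    Finset.Subset.trans Finset.subset_union_right (Finset.subset_insert _ _)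
  have hrne : ∀ r ∈ s, (r : ℚ) ≠ 0 := by
    intro r hr
    have := h2 r (hsP r hr)
    positivity
  -- the natural-number equation
  have key : ∑ r ∈ s, g r * ∏ t ∈ s.erase r, t = ∑ r ∈ s, h r * ∏ t ∈ s.erase r, t := by
    have hq : (↑(∑ r ∈ s, g r * ∏ t ∈ s.erase r, t) : ℚ)
        = ↑(∑ r ∈ s, h r * ∏ t ∈ s.erase r, t) := by
      push_cast
      have hmul := congrArg (fun x : ℚ => x * ∏ t ∈ s, (t : ℚ))
        ((val_sum hgsub).symm.trans (hv.trans (val_sum hhsub)))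
      simp only [Finset.sum_mul] at hmul
      have hterm : ∀ (k : ℕ →₀ ℕ), ∀ r ∈ s,
          (k r : ℚ) / r * ∏ t ∈ s, (t : ℚ) = (k r : ℚ) * ∏ t ∈ s.erase r, (t : ℚ) := by
        intro k r hr
        rw [← Finset.mul_prod_erase s (fun t => (t : ℚ)) hr]
        have := hrne r hr
        field_simp
      calc ∑ r ∈ s, (g r : ℚ) * ∏ t ∈ s.erase r, (t : ℚ)
          = ∑ r ∈ s, (g r : ℚ) / r * ∏ t ∈ s, (t : ℚ) :=
            Finset.sum_congr rfl fun r hr => (hterm g r hr).symm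
        _ = ∑ r ∈ s, (h r : ℚ) / r * ∏ t ∈ s, (t : ℚ) := hmul
        _ = ∑ r ∈ s, (h r : ℚ) * ∏ t ∈ s.erase r, (t : ℚ) :=
            Finset.sum_congr rfl fun r hr => hterm h r hr
    exact_mod_cast hq
  haveI : NeZero p := ⟨by have := h2 p hp; omega⟩
  have key2 := congrArg (fun n : ℕ => (n : ZMod p)) key
  simp only [Nat.cast_sum, Nat.cast_mul, Nat.cast_prod] at key2
  have hzero : ∀ (k : ℕ →₀ ℕ), ∀ r ∈ s, r ≠ p →
      (k r : ZMod p) * ∏ t ∈ s.erase r, (t : ZMod p) = 0 := by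
    intro k r _ hrp
    rw [Finset.prod_eq_zero (i := p) (Finset.mem_erase.mpr ⟨hrp.symm, hps⟩)
      (ZMod.natCast_self p), mul_zero]
  rw [Finset.sum_eq_single p (hzero g) (fun habs => absurd hps habs),
    Finset.sum_eq_single p (hzero h) (fun habs => absurd hps habs)] at key2
  have hu : IsUnit (∏ t ∈ s.erase p, (t : ZMod p)) := by
    rw [← Nat.cast_prod]
    rw [ZMod.isUnit_iff_coprime]
    refine Nat.Coprime.prod_left fun r hr => ?_
    exact hcop r (hsP r (Finset.mem_of_mem_erase hr)) p hp (Finset.ne_of_mem_erase hr)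
  have hcast : (g p : ZMod p) = (h p : ZMod p) := hu.mul_right_cancel key2
  exact (ZMod.natCast_eq_natCast_iff' _ _ _).mp hcast

lemma sval_eq {P : Set ℕ} (h2 : ∀ p ∈ P, 2 ≤ p)
    (hcop : ∀ p ∈ P, ∀ q ∈ P, p ≠ q → Nat.Coprime p q)
    {g h : ℕ →₀ ℕ} (hg : ↑g.support ⊆ P) (hh : ↑h.support ⊆ P)
    (hv : val g = val h) : Sval g = Sval h := by
  classical
  set u := g.support ∪ h.support with hu
  have hP : ∀ r ∈ u, r ∈ P := by
    intro r hr
    rcases Finset.mem_union.mp hr with h' | h'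
    · exact hg h'
    · exact hh h'
  rw [sval_sum (s := u) Finset.subset_union_left,
    sval_sum (s := u) Finset.subset_union_right]
  exact Finset.sum_congr rfl fun r hr => mod_eq h2 hcop hg hh hv (hP r hr)

lemma div_mod_cast {a r : ℕ} (hr : r ≠ 0) :
    ((a / r : ℕ) : ℚ) + ((a % r : ℕ) : ℚ) / r = (a : ℚ) / r := by
  have h1 := Nat.div_add_mod a r
  have hr' : (r : ℚ) ≠ 0 := Nat.cast_ne_zero.mpr hr
  field_simp
  rw [mul_comm]
  exact_mod_cast h1

lemma nval_eq {P : Set ℕ} (h2 : ∀ p ∈ P, 2 ≤ p)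
    (hcop : ∀ p ∈ P, ∀ q ∈ P, p ≠ q → Nat.Coprime p q)
    {g h : ℕ →₀ ℕ} (hg : ↑g.support ⊆ P) (hh : ↑h.support ⊆ P)
    (hv : val g = val h) : Nval g = Nval h := by
  classical
  set u := g.support ∪ h.support with hu
  have hP : ∀ r ∈ u, r ∈ P := by
    intro r hr
    rcases Finset.mem_union.mp hr with h' | h'
    · exact hg h'
    · exact hh h'
  have key : ∀ (k : ℕ →₀ ℕ), k.support ⊆ u →
      (Nval k : ℚ) = val k - ∑ r ∈ u, ((k r % r : ℕ) : ℚ) / r := by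
    intro k hk
    rw [val_sum hk, nval_sum hk]
    push_cast
    rw [eq_sub_iff_add_eq, ← Finset.sum_add_distrib]
    exact Finset.sum_congr rfl fun r hr =>
      div_mod_cast (by have := h2 r (hP r hr); omega)
  have hmods : ∑ r ∈ u, ((g r % r : ℕ) : ℚ) / r = ∑ r ∈ u, ((h r % r : ℕ) : ℚ) / r :=
    Finset.sum_congr rfl fun r hr => by
      rw [mod_eq h2 hcop hg hh hv (hP r hr)]
  have : (Nval g : ℚ) = (Nval h : ℚ) := by
    rw [key g Finset.subset_union_left, key h Finset.subset_union_right, hv, hmods]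
  exact_mod_cast this

lemma nval_le (g d : ℕ →₀ ℕ) : Nval g ≤ Nval (g + d) := by
  classical
  have h1 : g.support ⊆ g.support ∪ d.support := Finset.subset_union_left
  have h2 : (g + d).support ⊆ g.support ∪ d.support := Finsupp.support_add
  rw [nval_sum h1, nval_sum h2]
  refine Finset.sum_le_sum fun r _ => ?_
  rw [Finsupp.add_apply]
  exact Nat.div_le_div_right (Nat.le_add_right _ _)

lemma mod_add_of_div_eq {a b r : ℕ} (h : (a + b) / r = a / r) :
    (a + b) % r = a % r + b := by
  have h1 := Nat.div_add_mod a r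
  have h2 := Nat.div_add_mod (a + b) r
  rw [h] at h2
  set w := r * (a / r) with hw
  omega

lemma sval_add_of_nval_eq (g d : ℕ →₀ ℕ) (h : Nval (g + d) = Nval g) :
    Sval (g + d) = Sval g + d.sum fun _ a => a := by
  classical
  have h1 : g.support ⊆ g.support ∪ d.support := Finset.subset_union_left
  have h1' : d.support ⊆ g.support ∪ d.support := Finset.subset_union_right
  have h2 : (g + d).support ⊆ g.support ∪ d.support := Finsupp.support_add
  rw [nval_sum h1, nval_sum h2] at h
  have hterm : ∀ r ∈ g.support ∪ d.support, (g + d) r / r = g r / r := by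
    intro r hr
    refine ((Finset.sum_eq_sum_iff_of_le fun r _ => ?_).mp h.symm r hr).symm
    rw [Finsupp.add_apply]
    exact Nat.div_le_div_right (Nat.le_add_right _ _)
  rw [sval_sum h1, sval_sum h2,
    Finsupp.sum_of_support_subset d h1' (fun _ a => a) (fun _ _ => rfl)]
  rw [← Finset.sum_add_distrib]
  refine Finset.sum_congr rfl fun r hr => ?_
  have := hterm r hr
  rw [Finsupp.add_apply] at this ⊢
  exact mod_add_of_div_eq this

lemma eventually_const (n : ℕ → ℕ) (hn : ∀ k, n (k + 1) ≤ n k) :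
    ∃ K, ∀ k ≥ K, n k = n K := by
  have hne : (Set.range n).Nonempty := ⟨n 0, 0, rfl⟩
  obtain ⟨K, hK⟩ := Nat.sInf_mem hne
  refine ⟨K, fun k hk => ?_⟩
  have hmono : ∀ i j, i ≤ j → n j ≤ n i := by
    intro i j hij
    induction j, hij using Nat.le_induction with
    | base => exact le_refl _
    | succ j _ ih => exact (hn j).trans ih
  exact le_antisymm (hK ▸ hmono K k hk) (hK ▸ Nat.sInf_le ⟨k, rfl⟩)

end Stmt7Aux

open Stmt7Aux in
theorem stmt7 (P : Set ℕ) (hinf : P.Infinite) (h2 : ∀ p ∈ P, 2 ≤ p)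
    (hcop : ∀ p ∈ P, ∀ q ∈ P, p ≠ q → Nat.Coprime p q) :
    AddACCP (MP P) := by
  intro f hf hchain
  classical
  choose c hcM hce using hchain
  choose g hgP hgv using fun n => exists_rep (hf n)
  choose d hdP hdv using fun n => exists_rep (hcM n)
  have hsupp : ∀ n, ↑(g (n + 1) + d n).support ⊆ P := by
    intro n x hx
    rcases Finset.mem_union.mp (Finsupp.support_add hx) with h' | h'
    · exact hgP (n + 1) h'
    · exact hdP n h'
  have hrep : ∀ n, val (g (n + 1) + d n) = val (g n) := fun n => by
    rw [val_add, hgv, hgv, hdv, ← hce n]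
  have hNeq : ∀ n, Nval (g (n + 1) + d n) = Nval (g n) := fun n =>
    nval_eq h2 hcop (hsupp n) (hgP n) (hrep n)
  have hSeq : ∀ n, Sval (g (n + 1) + d n) = Sval (g n) := fun n =>
    sval_eq h2 hcop (hsupp n) (hgP n) (hrep n)
  have hNle : ∀ n, Nval (g (n + 1)) ≤ Nval (g n) := fun n =>
    (hNeq n) ▸ nval_le (g (n + 1)) (d n)
  obtain ⟨K1, hK1⟩ := eventually_const (fun n => Nval (g n)) hNle
  -- after K1do, each step's d-sum is recorded by Sval drop
  have hstepS : ∀ k, k ≥ K1 → Sval (g k) = Sval (g (k + 1)) + (d k).sum fun _ a => a := by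
    intro k hk
    have hN : Nval (g (k + 1) + d k) = Nval (g (k + 1)) := by
      rw [hNeq k]
      have e1 := hK1 k hk
      have e2 := hK1 (k + 1) (by omega)
      rw [e1, e2]
    have := sval_add_of_nval_eq (g (k + 1)) (d k) hN
    rw [hSeq k] at this
    exact this
  have hSle : ∀ j, Sval (g (K1 + (j + 1))) ≤ Sval (g (K1 + j)) := by
    intro j
    have := hstepS (K1 + j) (by omega)
    rw [show K1 + (j + 1) = K1 + j + 1 by omega]
    omega
  obtain ⟨K2, hK2⟩ := eventually_const (fun j => Sval (g (K1 + j))) hSle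
  set N := K1 + K2 with hN
  have hstep : ∀ k, k ≥ N → f (k + 1) = f k := by
    intro k hk
    have hSk : Sval (g k) = Sval (g (k + 1)) + (d k).sum fun _ a => a :=
      hstepS k (by omega)
    have e1 : Sval (g k) = Sval (g (K1 + K2)) := by
      have := hK2 (k - K1) (by omega)
      rwa [show K1 + (k - K1) = k by omega] at this
    have e2 : Sval (g (k + 1)) = Sval (g (K1 + K2)) := by
      have := hK2 (k + 1 - K1) (by omega)
      rwa [show K1 + (k + 1 - K1) = k + 1 by omega] at this
    have hsum0 : ((d k).sum fun _ a => a) = 0 := by omega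
    have hd0 : d k = 0 := by
      ext r
      simp only [Finsupp.coe_zero, Pi.zero_apply]
      by_contra hr
      have hrm : r ∈ (d k).support := Finsupp.mem_support_iff.mpr hr
      have : d k r ≤ (d k).sum fun _ a => a :=
        Finset.single_le_sum (f := fun r => d k r) (fun _ _ => Nat.zero_le _) hrm
      omega
    have hc0 : c k = 0 := by
      rw [← hdv k, hd0]
      simp [val]
    have := hce k
    rw [hc0, add_zero] at this
    exact this.symm
  refine ⟨N, fun n hn => ⟨0, zero_mem _, ?_⟩⟩
  rw [add_zero]
  have key : ∀ m, f (N + m) = f N := by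
    intro m
    induction m with
    | zero => rfl
    | succ m ih =>
        rw [show N + (m + 1) = (N + m) + 1 by omega, hstep (N + m) (by omega), ih]
  have := key (n - N)
  rwa [show N + (n - N) = n by omega] at this
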